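/- arXiv:1411.6614 — 2 statements merged into one kernel-verified Lean document; each statement's English description precedes it below -/
import Mathlib

section
/- Projection Lemma: Let ℋ be a finite-dimensional complex inner product space decomposed as ℋ = S ⊕ S⊥ for a subspace S, and let P be the orthogonal projection onto S. Let H₁ and H₂ be Hermitian operators on ℋ such that H₂ vanishes on S (H₂v = 0 for all v ∈ S) and ⟨v, H₂ v⟩ ≥ J‖v‖² for all v ∈ S⊥, where J > 2‖H₁‖ (operator norm). Then λ(H₁|_S) − ‖H₁‖²/(J − 2‖H₁‖) ≤ λ(H₁ + H₂) ≤ λ(H₁|_S), where λ(H₁|_S) denotes the minimum of ⟨v, H₁ v⟩ over unit vectors v ∈ S. -/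
open scoped InnerProductSpace

/-- The infimum of the Rayleigh quotient `⟨v, T v⟩` of `T` over unit vectors belonging
to the set `S`.  For a self-adjoint operator and `S = univ` this is the smallest
eigenvalue (the ground-state energy `λ(T)`); for `S` a subspace it is `λ(T|_S)`. -/
noncomputable def rayleighMin {E : Type*} [NormedAddCommGroup E] [InnerProductSpace ℂ E]
    (T : E →L[ℂ] E) (S : Set E) : ℝ :=
  sInf { r | ∃ v ∈ S, ‖v‖ = 1 ∧ r = (⟪v, T v⟫_ℂ).re }

lemma re_inner_op_le {E : Type*} [NormedAddCommGroup E] [InnerProductSpace ℂ E]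
    (T : E →L[ℂ] E) (x y : E) : |(⟪x, T y⟫_ℂ).re| ≤ ‖T‖ * ‖x‖ * ‖y‖ := by
  calc |(⟪x, T y⟫_ℂ).re| ≤ ‖⟪x, T y⟫_ℂ‖ := Complex.abs_re_le_norm _
  _ ≤ ‖x‖ * ‖T y‖ := norm_inner_le_norm _ _
  _ ≤ ‖x‖ * (‖T‖ * ‖y‖) := by
      gcongr
      exact T.le_opNorm y
  _ = ‖T‖ * ‖x‖ * ‖y‖ := by ring

/-- **Projection lemma.**  If the Hermitian operator `H₂` vanishes on the subspace `S` and is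
bounded below by `J > 2‖H₁‖` on `Sᗮ`, then the ground-state energy of `H₁ + H₂` is within
`‖H₁‖²/(J − 2‖H₁‖)` below `λ(H₁|_S)`, and never exceeds `λ(H₁|_S)`. -/
theorem projection_lemma {E : Type*} [NormedAddCommGroup E] [InnerProductSpace ℂ E]
    [FiniteDimensional ℂ E]
    (H₁ H₂ : E →L[ℂ] E) (hH₁ : IsSelfAdjoint H₁) (hH₂ : IsSelfAdjoint H₂)
    (S : Submodule ℂ E) (hS : S ≠ ⊥)
    (P : E →L[ℂ] E) (hP : ∀ v, P v = (S.orthogonalProjectionOnto v : E))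
    (hvanish : ∀ v ∈ S, H₂ v = 0)
    (J : ℝ) (hJlower : ∀ v ∈ Sᗮ, J * ‖v‖ ^ 2 ≤ (⟪v, H₂ v⟫_ℂ).re)
    (hJ : 2 * ‖H₁‖ < J) :
    rayleighMin H₁ (S : Set E) - ‖H₁‖ ^ 2 / (J - 2 * ‖H₁‖)
        ≤ rayleighMin (H₁ + H₂) Set.univ ∧
      rayleighMin (H₁ + H₂) Set.univ ≤ rayleighMin H₁ (S : Set E) := by
  set T : Set ℝ := { r | ∃ v ∈ (S : Set E), ‖v‖ = 1 ∧ r = (⟪v, H₁ v⟫_ℂ).re } with hT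
  set U : Set ℝ := { r | ∃ v ∈ (Set.univ : Set E), ‖v‖ = 1 ∧ r = (⟪v, (H₁ + H₂) v⟫_ℂ).re }
    with hU
  have hTne : T.Nonempty := by
    obtain ⟨x, hxS, hx0⟩ := Submodule.exists_mem_ne_zero_of_ne_bot hS
    have hxpos : (0:ℝ) < ‖x‖ := norm_pos_iff.2 hx0
    refine ⟨_, ((‖x‖⁻¹ : ℝ) : ℂ) • x, Submodule.smul_mem S _ hxS, ?_, rfl⟩
    rw [norm_smul]
    simp [abs_of_pos, hxpos, inv_mul_cancel₀ hxpos.ne']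
  have hTlb : ∀ r ∈ T, -‖H₁‖ ≤ r := by
    rintro r ⟨v, hvS, hv1, rfl⟩
    have := (abs_le.1 (re_inner_op_le H₁ v v)).1
    rw [hv1] at this
    linarith
  have hTbdd : BddBelow T := ⟨-‖H₁‖, hTlb⟩
  have hinfub : sInf T ≤ ‖H₁‖ := by
    obtain ⟨r, hr⟩ := hTne
    refine (csInf_le hTbdd hr).trans ?_
    obtain ⟨v, hvS, hv1, rfl⟩ := hr
    have := (abs_le.1 (re_inner_op_le H₁ v v)).2
    rw [hv1] at this
    linarith
  have hTU : T ⊆ U := by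
    rintro r ⟨v, hvS, hv1, rfl⟩
    refine ⟨v, Set.mem_univ v, hv1, ?_⟩
    simp [ContinuousLinearMap.add_apply, hvanish v hvS]
  have hUne : U.Nonempty := hTne.mono hTU
  have ha : (0:ℝ) < J - 2 * ‖H₁‖ := by linarith
  -- main estimate
  have main : ∀ r ∈ U, sInf T - ‖H₁‖ ^ 2 / (J - 2 * ‖H₁‖) ≤ r := by
    rintro r ⟨v, -, hv1, rfl⟩
    set x : E := (S.orthogonalProjectionOnto v : E) with hxdef
    set y : E := v - x with hydef
    have hxS : x ∈ S := SetLike.coe_mem _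
    have hyS : y ∈ Sᗮ := Submodule.sub_starProjection_mem_orthogonal (K := S) v
    have hxy0 : ⟪x, y⟫_ℂ = 0 := Submodule.inner_right_of_mem_orthogonal hxS hyS
    have hvxy : v = x + y := by simp [hydef]
    have hpyth : ‖x‖ ^ 2 + ‖y‖ ^ 2 = 1 := by
      have h := norm_add_sq (𝕜 := ℂ) x y
      rw [← hvxy, hv1] at h
      simp [hxy0] at h
      linarith
    have hx1 : ‖x‖ ≤ 1 := by nlinarith [norm_nonneg x, norm_nonneg y]
    -- H₂ terms vanish on x
    have h2x : H₂ x = 0 := hvanish x hxS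
    have hx2y : ⟪x, H₂ y⟫_ℂ = 0 := by
      have hsym := hH₂.isSymmetric x y
      simp only [ContinuousLinearMap.coe_coe] at hsym
      rw [← hsym, h2x, inner_zero_left]
    have hexp : (⟪v, (H₁ + H₂) v⟫_ℂ).re
        = (⟪x, H₁ x⟫_ℂ).re + (⟪x, H₁ y⟫_ℂ).re + (⟪y, H₁ x⟫_ℂ).re
          + (⟪y, H₁ y⟫_ℂ).re + (⟪y, H₂ y⟫_ℂ).re := by
      rw [hvxy]
      simp [ContinuousLinearMap.add_apply, map_add, inner_add_left, inner_add_right,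
        h2x, hx2y]
      ring
    -- λS ‖x‖² ≤ ⟪x, H₁ x⟫
    have h1 : sInf T * ‖x‖ ^ 2 ≤ (⟪x, H₁ x⟫_ℂ).re := by
      rcases eq_or_ne x 0 with h | h
      · simp [h]
      · have hxpos : (0:ℝ) < ‖x‖ := norm_pos_iff.2 h
        have hmem : (⟪((‖x‖⁻¹ : ℝ) : ℂ) • x, H₁ (((‖x‖⁻¹ : ℝ) : ℂ) • x)⟫_ℂ).re ∈ T := by
          refine ⟨((‖x‖⁻¹ : ℝ) : ℂ) • x, Submodule.smul_mem S _ hxS, ?_, rfl⟩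
          rw [norm_smul]
          simp [abs_of_pos, hxpos, inv_mul_cancel₀ hxpos.ne']
        have hle := csInf_le hTbdd hmem
        have heq : (⟪((‖x‖⁻¹ : ℝ) : ℂ) • x, H₁ (((‖x‖⁻¹ : ℝ) : ℂ) • x)⟫_ℂ).re
            = ‖x‖⁻¹ * ‖x‖⁻¹ * (⟪x, H₁ x⟫_ℂ).re := by
          rw [map_smul, inner_smul_left, inner_smul_right, Complex.conj_ofReal]
          rw [← mul_assoc, ← Complex.ofReal_mul, Complex.re_ofReal_mul]
        rw [heq] at hle
        have hrw : ‖x‖⁻¹ * ‖x‖⁻¹ * (⟪x, H₁ x⟫_ℂ).re * ‖x‖ ^ 2 = (⟪x, H₁ x⟫_ℂ).re := by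
          have hne : ‖x‖ ≠ 0 := hxpos.ne'
          field_simp
        have := mul_le_mul_of_nonneg_right hle (sq_nonneg ‖x‖)
        rw [hrw] at this
        exact this
    have f1 : sInf T - sInf T * ‖y‖ ^ 2 ≤ (⟪x, H₁ x⟫_ℂ).re := by
      have : ‖x‖ ^ 2 = 1 - ‖y‖ ^ 2 := by linarith
      rw [this] at h1
      linarith [h1]
    have f2 : sInf T * ‖y‖ ^ 2 ≤ ‖H₁‖ * ‖y‖ ^ 2 :=
      mul_le_mul_of_nonneg_right hinfub (sq_nonneg _)
    have f3 := (abs_le.1 (re_inner_op_le H₁ x y)).1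
    have f3' := (abs_le.1 (re_inner_op_le H₁ y x)).1
    have f4 : ‖H₁‖ * ‖x‖ * ‖y‖ ≤ ‖H₁‖ * ‖y‖ := by
      nlinarith [mul_nonneg (mul_nonneg (norm_nonneg H₁) (norm_nonneg y)) (sub_nonneg.2 hx1)]
    have f5 := (abs_le.1 (re_inner_op_le H₁ y y)).1
    have f6 : J * ‖y‖ ^ 2 ≤ (⟪y, H₂ y⟫_ℂ).re := hJlower y hyS
    have key : -(‖H₁‖ ^ 2 / (J - 2 * ‖H₁‖))
        ≤ (J - 2 * ‖H₁‖) * ‖y‖ ^ 2 - 2 * ‖H₁‖ * ‖y‖ := by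
      rw [neg_le, le_div_iff₀ ha]
      nlinarith [sq_nonneg ((J - 2 * ‖H₁‖) * ‖y‖ - ‖H₁‖)]
    rw [hexp]
    nlinarith [f1, f2, f3, f3', f4, f5, f6, key, norm_nonneg y, norm_nonneg x,
      sq_nonneg ‖y‖, mul_nonneg (mul_nonneg (norm_nonneg H₁) (norm_nonneg x)) (norm_nonneg y)]
  constructor
  · exact le_csInf hUne main
  · exact csInf_le_csInf ⟨sInf T - ‖H₁‖ ^ 2 / (J - 2 * ‖H₁‖), main⟩ hTne hTU
end

section
/- Fannes continuity of the von Neumann entropy: Let ρ and σ be density matrices on ℂ^D (D ≥ 2), and let T := ‖ρ − σ‖₁ be the trace distance, i.e., the sum of the absolute values of the eigenvalues of the Hermitian matrix ρ − σ. If T ≤ 1/e, then |S₁(ρ) − S₁(σ)| ≤ T·log D − T·log T. -/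
open scoped ComplexOrder
open Matrix

namespace FannesAux

noncomputable def eta (x : ℝ) : ℝ := -(x * Real.log x)

lemma eta_zero : eta 0 = 0 := by simp [eta]
lemma eta_one : eta 1 = 0 := by simp [eta]

lemma concaveOn_eta : ConcaveOn ℝ (Set.Ici 0) eta := Real.convexOn_mul_log.neg

lemma eta_nonneg {x : ℝ} (h0 : 0 ≤ x) (h1 : x ≤ 1) : 0 ≤ eta x := by
  have : x * Real.log x ≤ 0 :=
    mul_nonpos_of_nonneg_of_nonpos h0 (Real.log_nonpos h0 h1)
  simpa [eta] using this

lemma log_le_neg_one {ε : ℝ} (h0 : 0 < ε) (he : ε ≤ (Real.exp 1)⁻¹) :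
    Real.log ε ≤ -1 := by
  calc Real.log ε ≤ Real.log (Real.exp 1)⁻¹ := Real.log_le_log h0 he
    _ = -1 := by rw [Real.log_inv, Real.log_exp]

/-- slope comparison for concave functions: shrinking the interval on either side
increases the slope. -/
lemma slope_pair {f : ℝ → ℝ} (hf : ConcaveOn ℝ (Set.Ici 0) f) {x y z : ℝ}
    (hx : 0 ≤ x) (hxy : x < y) (hyz : y < z) :
    (f z - f x) / (z - x) ≤ (f y - f x) / (y - x) ∧
      (f z - f y) / (z - y) ≤ (f z - f x) / (z - x) := by
  have hy : (0:ℝ) ≤ y := le_of_lt (lt_of_le_of_lt hx hxy)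
  have hz : (0:ℝ) ≤ z := le_of_lt (lt_of_le_of_lt hy hyz)
  have h1 := hf.slope_anti_adjacent hx hz hxy hyz
  have hyx : (0:ℝ) < y - x := by linarith
  have hzy : (0:ℝ) < z - y := by linarith
  have hzx : (0:ℝ) < z - x := by linarith
  rw [div_le_div_iff₀ hzy hyx] at h1
  constructor
  · rw [div_le_div_iff₀ hzx hyx]; nlinarith
  · rw [div_le_div_iff₀ hzy hzx]; nlinarith

lemma slope_mono {f : ℝ → ℝ} (hf : ConcaveOn ℝ (Set.Ici 0) f) {a b c d : ℝ}
    (ha : 0 ≤ a) (hab : a < b) (hcd : c < d) (hac : a ≤ c) (hbd : b ≤ d) :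
    (f d - f c) / (d - c) ≤ (f b - f a) / (b - a) := by
  have hc : (0:ℝ) ≤ c := ha.trans hac
  rcases le_or_gt b c with hbc | hcb
  · rcases eq_or_lt_of_le hbc with rfl | hbc'
    · exact hf.slope_anti_adjacent ha (by linarith : (0:ℝ) ≤ d) hab hcd
    · exact (hf.slope_anti_adjacent (ha.trans hab.le) (by linarith : (0:ℝ) ≤ d)
        hbc' hcd).trans (hf.slope_anti_adjacent ha hc hab hbc')
  · have step1 : (f d - f c) / (d - c) ≤ (f b - f c) / (b - c) := by
      rcases eq_or_lt_of_le hbd with rfl | hbd'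
      · exact le_rfl
      · exact (slope_pair hf hc hcb hbd').1
    have step2 : (f b - f c) / (b - c) ≤ (f b - f a) / (b - a) := by
      rcases eq_or_lt_of_le hac with rfl | hac'
      · exact le_rfl
      · exact (slope_pair hf ha hac' hcb).2
    exact step1.trans step2

lemma exp_inv_lt_one : (Real.exp 1)⁻¹ < 1 := by
  rw [inv_lt_one_iff₀]; right
  have := Real.add_one_le_exp 1; linarith

lemma self_le_eta {ε : ℝ} (h0 : 0 ≤ ε) (he : ε ≤ (Real.exp 1)⁻¹) : ε ≤ eta ε := by
  rcases eq_or_lt_of_le h0 with rfl | h0'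
  · simp [eta_zero]
  · have := log_le_neg_one h0' he
    have : ε * 1 ≤ ε * (-Real.log ε) := by
      apply mul_le_mul_of_nonneg_left (by linarith) h0
    simp only [eta]; nlinarith

lemma eta_one_sub_le {ε : ℝ} (h0 : 0 ≤ ε) (hε1 : ε < 1) : eta (1 - ε) ≤ ε := by
  have h1ε : 0 < 1 - ε := by linarith
  have hlog : Real.log (1 - ε)⁻¹ ≤ (1 - ε)⁻¹ - 1 :=
    Real.log_le_sub_one_of_pos (by positivity)
  have : eta (1 - ε) = (1 - ε) * Real.log (1 - ε)⁻¹ := by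
    rw [Real.log_inv, eta]; ring
  rw [this]
  have h2 : (1 - ε) * Real.log (1 - ε)⁻¹ ≤ (1 - ε) * ((1 - ε)⁻¹ - 1) :=
    mul_le_mul_of_nonneg_left hlog (by linarith)
  have h3 : (1 - ε) * ((1 - ε)⁻¹ - 1) = ε := by field_simp; ring
  linarith

lemma abs_eta_sub_eta_le {x y : ℝ} (h0 : 0 ≤ x) (hxy : x ≤ y) (hy1 : y ≤ 1)
    (he : y - x ≤ (Real.exp 1)⁻¹) : |eta x - eta y| ≤ eta (y - x) := by
  rcases eq_or_lt_of_le hxy with rfl | hlt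
  · simp [eta_zero]
  have hε0 : 0 < y - x := by linarith
  have hεlt1 : y - x < 1 := lt_of_le_of_lt he exp_inv_lt_one
  rw [abs_le]
  constructor
  · -- -(eta (y-x)) ≤ eta x - eta y, i.e. eta y - eta x ≤ eta (y - x)
    rcases eq_or_lt_of_le h0 with rfl | hx0
    · simp [eta_zero]
    · have hs := slope_mono concaveOn_eta (le_refl 0).ge.le hε0 (by linarith : x < y)
        (le_of_lt hx0) (by linarith : y - x ≤ y)
      -- (eta y - eta x)/(y - x) ≤ (eta (y-x) - eta 0)/((y-x) - 0)
      rw [eta_zero, sub_zero, sub_zero, div_le_div_iff₀ (by linarith) (by linarith)] at hs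
      nlinarith
  · -- eta x - eta y ≤ eta (y - x)
    have key : eta x - eta y ≤ eta (1 - (y - x)) := by
      rcases eq_or_lt_of_le hy1 with rfl | hy1'
      · have : x = 1 - (1 - x) := by ring
        rw [eta_one]; rw [sub_zero]
        have : (1:ℝ) - (1 - x) = x := by ring
        rw [this]
      · have hs := slope_mono concaveOn_eta h0 (show x < y by linarith)
          (show 1 - (y - x) < 1 by linarith) (by linarith) hy1
        rw [eta_one, div_le_div_iff₀ (by linarith) (by linarith)] at hs
        nlinarith
    have h2 : eta (1 - (y - x)) ≤ y - x := eta_one_sub_le (le_of_lt hε0) hεlt1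
    have h3 : y - x ≤ eta (y - x) := self_le_eta (le_of_lt hε0) he
    linarith

/-- Gibbs-type bound: `∑ η(ε i) ≤ E log n − E log E` where `E = ∑ ε i > 0`. -/
lemma sum_eta_le {n : ℕ} (hn : 0 < n) {ε : Fin n → ℝ} (hε : ∀ i, 0 ≤ ε i)
    (hE : 0 < ∑ i, ε i) :
    ∑ i, eta (ε i) ≤ (∑ i, ε i) * Real.log n - (∑ i, ε i) * Real.log (∑ i, ε i) := by
  set E := ∑ i, ε i with hEdef
  have key : ∀ i, eta (ε i) ≤ ε i * Real.log n - ε i * Real.log E + (E / n - ε i) := by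
    intro i
    rcases eq_or_lt_of_le (hε i) with h0 | h0
    · rw [← h0, eta_zero]; simp; positivity
    · have hlog : Real.log (E / (n * ε i)) ≤ E / (n * ε i) - 1 :=
        Real.log_le_sub_one_of_pos (by positivity)
      have hexp : Real.log (E / (n * ε i)) = Real.log E - Real.log n - Real.log (ε i) := by
        rw [Real.log_div (ne_of_gt hE) (by positivity), Real.log_mul (by positivity) (ne_of_gt h0)]
        ring
      rw [hexp] at hlog
      have h2 : ε i * (Real.log E - Real.log n - Real.log (ε i)) ≤
          ε i * (E / (n * ε i) - 1) := mul_le_mul_of_nonneg_left hlog (hε i)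
      have h3 : ε i * (E / (n * ε i) - 1) = E / n - ε i := by
        field_simp
      rw [h3] at h2
      simp only [eta]; nlinarith
  calc ∑ i, eta (ε i) ≤ ∑ i, (ε i * Real.log n - ε i * Real.log E + (E / n - ε i)) :=
        Finset.sum_le_sum fun i _ => key i
    _ = E * Real.log n - E * Real.log E := by
        rw [Finset.sum_add_distrib, Finset.sum_sub_distrib, ← Finset.sum_mul, ← Finset.sum_mul,
          Finset.sum_sub_distrib, Finset.sum_const, Finset.card_univ, Fintype.card_fin]
        rw [← hEdef]
        have : (n : ℝ) ≠ 0 := by positivity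
        rw [nsmul_eq_mul]
        field_simp
        ring

/-- `η` is monotone below `1/e`. -/
lemma eta_mono {E T : ℝ} (hE : 0 ≤ E) (hET : E ≤ T) (hT : T ≤ (Real.exp 1)⁻¹) :
    eta E ≤ eta T := by
  rcases eq_or_lt_of_le hE with rfl | hE'
  · rw [eta_zero]
    rcases eq_or_lt_of_le hET with rfl | hT'
    · simp [eta_zero]
    · have h1 : Real.log T ≤ -1 := log_le_neg_one hT' hT
      simp only [eta]; nlinarith
  · have hT' : 0 < T := lt_of_lt_of_le hE' hET
    have h1 : Real.log T ≤ -1 := log_le_neg_one hT' hT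
    have h2 : Real.log T - Real.log E ≤ T / E - 1 := by
      have := Real.log_le_sub_one_of_pos (show 0 < T / E by positivity)
      rwa [Real.log_div (ne_of_gt hT') (ne_of_gt hE')] at this
    simp only [eta]
    have h3 : E * (Real.log T - Real.log E) ≤ E * (T / E - 1) :=
      mul_le_mul_of_nonneg_left h2 hE
    have h4 : E * (T / E - 1) = T - E := by field_simp
    nlinarith

section LinAlg

variable {D : ℕ}

local notation "E" => EuclideanSpace ℂ (Fin D)

lemma toEuclideanLin_eigenvector {A : Matrix (Fin D) (Fin D) ℂ} (hA : A.IsHermitian)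
    (j : Fin D) :
    Matrix.toEuclideanLin A (hA.eigenvectorBasis j)
      = (hA.eigenvalues j : ℂ) • hA.eigenvectorBasis j := by
  apply PiLp.ext
  intro i
  have h := congrFun (hA.mulVec_eigenvectorBasis j) i
  simpa [Matrix.toEuclideanLin_apply, Real.rpow_natCast] using h

lemma repr_toEuclideanLin {A : Matrix (Fin D) (Fin D) ℂ} (hA : A.IsHermitian)
    (x : E) (j : Fin D) :
    hA.eigenvectorBasis.repr (Matrix.toEuclideanLin A x) j
      = (hA.eigenvalues j : ℂ) * hA.eigenvectorBasis.repr x j := by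
  have hsym := (Matrix.isHermitian_iff_isSymmetric.mp hA)
  rw [OrthonormalBasis.repr_apply_apply, OrthonormalBasis.repr_apply_apply,
    ← hsym (hA.eigenvectorBasis j) x, toEuclideanLin_eigenvector hA j,
    inner_smul_left]
  simp

lemma rayleigh_eq {A : Matrix (Fin D) (Fin D) ℂ} (hA : A.IsHermitian) (x : E) :
    RCLike.re (inner ℂ x (Matrix.toEuclideanLin A x) : ℂ)
      = ∑ j, hA.eigenvalues j * ‖hA.eigenvectorBasis.repr x j‖ ^ 2 := by
  rw [← hA.eigenvectorBasis.repr.inner_map_map x (Matrix.toEuclideanLin A x)]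
  rw [PiLp.inner_apply]
  rw [map_sum]
  congr 1
  ext j
  rw [repr_toEuclideanLin hA x j]
  set c := hA.eigenvectorBasis.repr x j
  rw [RCLike.inner_apply]
  rw [show (hA.eigenvalues j : ℂ) * c * (starRingEnd ℂ) c = (hA.eigenvalues j : ℂ) * (c * (starRingEnd ℂ) c) by ring]
  rw [Complex.mul_conj', ← Complex.ofReal_pow, ← Complex.ofReal_mul, RCLike.re_to_complex,
    Complex.ofReal_re]


variable {D : ℕ}

lemma norm_sq_repr (b : OrthonormalBasis (Fin D) ℂ (EuclideanSpace ℂ (Fin D)))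
    (x : EuclideanSpace ℂ (Fin D)) :
    ‖x‖ ^ 2 = ∑ j, ‖b.repr x j‖ ^ 2 := by
  rw [← b.repr.norm_map x, EuclideanSpace.norm_eq, Real.sq_sqrt (by positivity)]

lemma repr_supported (b : OrthonormalBasis (Fin D) ℂ (EuclideanSpace ℂ (Fin D)))
    (s : Finset (Fin D)) {x : EuclideanSpace ℂ (Fin D)}
    (hx : x ∈ Submodule.span ℂ (b '' (s : Set (Fin D)))) :
    ∀ j ∉ s, b.repr x j = 0 := by
  induction hx using Submodule.span_induction with
  | mem y hy =>
    obtain ⟨i, hi, rfl⟩ := hy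
    intro j hj
    rw [b.repr_self i]
    have : j ≠ i := fun h => hj (h ▸ hi)
    simp [EuclideanSpace.single_apply, this]
  | zero => simp
  | add y z _ _ hy hz => intro j hj; simp [hy j hj, hz j hj]
  | smul a y _ hy => intro j hj; simp [hy j hj]

lemma finrank_span_image (b : OrthonormalBasis (Fin D) ℂ (EuclideanSpace ℂ (Fin D)))
    (s : Finset (Fin D)) :
    Module.finrank ℂ (Submodule.span ℂ (b '' (s : Set (Fin D)))) = s.card := by
  have li : LinearIndependent ℂ (fun i : (s : Set (Fin D)) => b i) :=
    b.orthonormal.linearIndependent.comp _ Subtype.val_injective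
  have himg : b '' (s : Set (Fin D)) = Set.range (fun i : (s : Set (Fin D)) => b i) := by
    rw [← Set.image_eq_range]
  rw [himg, finrank_span_eq_card li]
  simp


variable {D : ℕ}

noncomputable def sortedEig {A : Matrix (Fin D) (Fin D) ℂ} (hA : A.IsHermitian) : Fin D → ℝ :=
  hA.eigenvalues ∘ Tuple.sort hA.eigenvalues

lemma sortedEig_monotone {A : Matrix (Fin D) (Fin D) ℂ} (hA : A.IsHermitian) :
    Monotone (sortedEig hA) := Tuple.monotone_sort _

lemma sum_sortedEig {A : Matrix (Fin D) (Fin D) ℂ} (hA : A.IsHermitian) :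
    ∑ i, sortedEig hA i = ∑ i, hA.eigenvalues i :=
  Equiv.sum_comp (Tuple.sort hA.eigenvalues) hA.eigenvalues

lemma psd_re_inner_nonneg {A : Matrix (Fin D) (Fin D) ℂ} (hA : A.PosSemidef)
    (x : EuclideanSpace ℂ (Fin D)) :
    0 ≤ RCLike.re (inner ℂ x (Matrix.toEuclideanLin A x) : ℂ) := by
  rw [EuclideanSpace.inner_eq_star_dotProduct, Matrix.toEuclideanLin_apply,
    WithLp.ofLp_toLp, dotProduct_comm]
  exact hA.re_dotProduct_nonneg _

/-- Weyl-type monotonicity: if `N - M` is PSD then each sorted eigenvalue of `M`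
is at most the corresponding sorted eigenvalue of `N`. -/
lemma sortedEig_mono {M N : Matrix (Fin D) (Fin D) ℂ} (hM : M.IsHermitian)
    (hN : N.IsHermitian) (h : (N - M).PosSemidef) (k : Fin D) :
    sortedEig hM k ≤ sortedEig hN k := by
  by_contra hlt
  push_neg at hlt
  set c := sortedEig hM k with hc
  set t := sortedEig hN k with ht
  set πM := Tuple.sort hM.eigenvalues
  set πN := Tuple.sort hN.eigenvalues
  set sV : Finset (Fin D) := (Finset.Ici k).image πM with hsV
  set sU : Finset (Fin D) := (Finset.Iic k).image πN with hsU
  set V := Submodule.span ℂ (hM.eigenvectorBasis '' (sV : Set (Fin D))) with hV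
  set U := Submodule.span ℂ (hN.eigenvectorBasis '' (sU : Set (Fin D))) with hU
  have hcardV : sV.card = D - k := by
    rw [hsV, Finset.card_image_of_injective _ πM.injective, Fin.card_Ici]
  have hcardU : sU.card = k + 1 := by
    rw [hsU, Finset.card_image_of_injective _ πN.injective, Fin.card_Iic]
  have hrankV : Module.finrank ℂ V = D - k := by rw [hV, finrank_span_image, hcardV]
  have hrankU : Module.finrank ℂ U = k + 1 := by rw [hU, finrank_span_image, hcardU]
  -- nontrivial intersection
  have hdim := Submodule.finrank_sup_add_finrank_inf_eq U V
  have hle : Module.finrank ℂ ↥(U ⊔ V) ≤ D :=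
    le_trans (Submodule.finrank_le _) (le_of_eq finrank_euclideanSpace_fin)
  have hks : (k : ℕ) < D := k.isLt
  have hpos : 0 < Module.finrank ℂ ↥(U ⊓ V) := by omega
  have hne : (U ⊓ V : Submodule ℂ (EuclideanSpace ℂ (Fin D))) ≠ ⊥ := by
    intro hbot
    rw [hbot, finrank_bot] at hpos
    exact lt_irrefl 0 hpos
  obtain ⟨x, hxmem, hx0⟩ := Submodule.exists_mem_ne_zero_of_ne_bot hne
  have hxU : x ∈ U := hxmem.1
  have hxV : x ∈ V := hxmem.2
  -- Rayleigh bounds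
  have hMx : c * ‖x‖ ^ 2 ≤ RCLike.re (inner ℂ x (Matrix.toEuclideanLin M x) : ℂ) := by
    rw [rayleigh_eq hM x, norm_sq_repr hM.eigenvectorBasis x, Finset.mul_sum]
    apply Finset.sum_le_sum
    intro j _
    by_cases hj : j ∈ sV
    · obtain ⟨i, hi, rfl⟩ := Finset.mem_image.mp hj
      have : c ≤ hM.eigenvalues (πM i) := by
        rw [hc]
        exact sortedEig_monotone hM (Finset.mem_Ici.mp hi)
      exact mul_le_mul_of_nonneg_right this (by positivity)
    · rw [repr_supported hM.eigenvectorBasis sV hxV j hj]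
      simp
  have hNx : RCLike.re (inner ℂ x (Matrix.toEuclideanLin N x) : ℂ) ≤ t * ‖x‖ ^ 2 := by
    rw [rayleigh_eq hN x, norm_sq_repr hN.eigenvectorBasis x, Finset.mul_sum]
    apply Finset.sum_le_sum
    intro j _
    by_cases hj : j ∈ sU
    · obtain ⟨i, hi, rfl⟩ := Finset.mem_image.mp hj
      have : hN.eigenvalues (πN i) ≤ t := by
        rw [ht]
        exact sortedEig_monotone hN (Finset.mem_Iic.mp hi)
      exact mul_le_mul_of_nonneg_right this (by positivity)
    · rw [repr_supported hN.eigenvectorBasis sU hxU j hj]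
      simp
  have hpsd : RCLike.re (inner ℂ x (Matrix.toEuclideanLin M x) : ℂ)
      ≤ RCLike.re (inner ℂ x (Matrix.toEuclideanLin N x) : ℂ) := by
    have h0 := psd_re_inner_nonneg h x
    have heq : Matrix.toEuclideanLin (N - M) x
        = Matrix.toEuclideanLin N x - Matrix.toEuclideanLin M x := by
      rw [map_sub]; rfl
    rw [heq, inner_sub_right, map_sub] at h0
    linarith
  have hnorm : 0 < ‖x‖ ^ 2 := by
    have : 0 < ‖x‖ := norm_pos_iff.mpr hx0
    positivity
  nlinarith

variable {D : ℕ}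

lemma trace_conj {U : Matrix (Fin D) (Fin D) ℂ} (hU : U ∈ Matrix.unitaryGroup (Fin D) ℂ)
    (d : Fin D → ℂ) : (U * Matrix.diagonal d * star U).trace = ∑ i, d i := by
  rw [Matrix.trace_mul_cycle, Matrix.mem_unitaryGroup_iff'.mp hU,
    Matrix.one_mul, Matrix.trace_diagonal]

lemma trace_eq_sum_eigenvalues {A : Matrix (Fin D) (Fin D) ℂ} (hA : A.IsHermitian) :
    A.trace = ∑ i, (hA.eigenvalues i : ℂ) := by
  conv_lhs => rw [hA.spectral_theorem]
  rw [Unitary.conjStarAlgAut_apply, trace_conj (hA.eigenvectorUnitary).2]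
  rfl

/-- positive part of a Hermitian matrix -/
noncomputable def posPart {A : Matrix (Fin D) (Fin D) ℂ} (hA : A.IsHermitian) :
    Matrix (Fin D) (Fin D) ℂ :=
  (hA.eigenvectorUnitary : Matrix (Fin D) (Fin D) ℂ)
    * Matrix.diagonal (fun i => ((max (hA.eigenvalues i) 0 : ℝ) : ℂ))
    * star (hA.eigenvectorUnitary : Matrix (Fin D) (Fin D) ℂ)

lemma diag_psd (d : Fin D → ℝ) (hd : ∀ i, 0 ≤ d i) :
    Matrix.PosSemidef (Matrix.diagonal (fun i => ((d i : ℝ) : ℂ))) := by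
  apply Matrix.PosSemidef.diagonal
  intro i
  simp only [Pi.zero_apply]
  rw [Complex.zero_le_real]
  exact hd i

lemma posPart_posSemidef {A : Matrix (Fin D) (Fin D) ℂ} (hA : A.IsHermitian) :
    (posPart hA).PosSemidef := by
  have := (diag_psd (fun i => max (hA.eigenvalues i) 0) (fun i => le_max_right _ _)
    ).mul_mul_conjTranspose_same (hA.eigenvectorUnitary : Matrix (Fin D) (Fin D) ℂ)
  rwa [← Matrix.star_eq_conjTranspose] at this

lemma posPart_sub_posSemidef {A : Matrix (Fin D) (Fin D) ℂ} (hA : A.IsHermitian) :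
    (posPart hA - A).PosSemidef := by
  have heq : posPart hA - A
      = (hA.eigenvectorUnitary : Matrix (Fin D) (Fin D) ℂ)
        * Matrix.diagonal (fun i => ((max (hA.eigenvalues i) 0 - hA.eigenvalues i : ℝ) : ℂ))
        * star (hA.eigenvectorUnitary : Matrix (Fin D) (Fin D) ℂ) := by
    calc posPart hA - A
        = posPart hA - (hA.eigenvectorUnitary : Matrix (Fin D) (Fin D) ℂ)
            * Matrix.diagonal (RCLike.ofReal ∘ hA.eigenvalues)
            * star (hA.eigenvectorUnitary : Matrix (Fin D) (Fin D) ℂ) := by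
          have h := hA.spectral_theorem; rw [Unitary.conjStarAlgAut_apply] at h; rw [← h]
      _ = _ := by
          rw [posPart, ← Matrix.sub_mul, ← Matrix.mul_sub, Matrix.diagonal_sub]
          rw [show RCLike.ofReal ∘ hA.eigenvalues = fun i => ((hA.eigenvalues i : ℝ) : ℂ) from rfl]
          congr 2
          funext i
          push_cast
          ring
  rw [heq]
  have := (diag_psd (fun i => max (hA.eigenvalues i) 0 - hA.eigenvalues i)
      (fun i => by simp [sub_nonneg, le_max_left])
    ).mul_mul_conjTranspose_same (hA.eigenvectorUnitary : Matrix (Fin D) (Fin D) ℂ)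
  rwa [← Matrix.star_eq_conjTranspose] at this

lemma posPart_trace {A : Matrix (Fin D) (Fin D) ℂ} (hA : A.IsHermitian) :
    (posPart hA).trace = ∑ i, ((max (hA.eigenvalues i) 0 : ℝ) : ℂ) :=
  trace_conj (hA.eigenvectorUnitary).2 _


end LinAlg

end FannesAux

/-- Renyi entropy `S_α` (with `S₁` the von Neumann entropy), via eigenvalues. -/
noncomputable def renyiEntropy {I : Type*} [Fintype I] [DecidableEq I] (α : ℝ)
    (ρ : Matrix I I ℂ) : ℝ :=
  if h : ρ.IsHermitian then
    if α = 1 then ∑ i, -(h.eigenvalues i * Real.log (h.eigenvalues i))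
    else (1 - α)⁻¹ * Real.log (∑ i, h.eigenvalues i ^ α)
  else 0

/-- A density matrix: positive semidefinite with trace one. -/
def IsDensityMatrix {I : Type*} [Fintype I] (ρ : Matrix I I ℂ) : Prop :=
  ρ.PosSemidef ∧ ρ.trace = 1

/-- The trace norm of a Hermitian matrix: the sum of the absolute values of its
eigenvalues. -/
noncomputable def traceNorm {I : Type*} [Fintype I] [DecidableEq I]
    (M : Matrix I I ℂ) : ℝ :=
  if h : M.IsHermitian then ∑ i, |h.eigenvalues i| else 0

open FannesAux in
/-- **Fannes continuity of the von Neumann entropy**: if `T = ‖ρ − σ‖₁ ≤ 1/e` then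
`|S₁(ρ) − S₁(σ)| ≤ T·log D − T·log T`. -/
theorem fannes_inequality {D : ℕ} (hD : 2 ≤ D)
    (ρ σ : Matrix (Fin D) (Fin D) ℂ)
    (hρ : IsDensityMatrix ρ) (hσ : IsDensityMatrix σ)
    (hT : traceNorm (ρ - σ) ≤ (Real.exp 1)⁻¹) :
    |renyiEntropy 1 ρ - renyiEntropy 1 σ|
      ≤ traceNorm (ρ - σ) * Real.log D
          - traceNorm (ρ - σ) * Real.log (traceNorm (ρ - σ)) := by
  classical
  obtain ⟨hρpsd, hρtr⟩ := hρ
  obtain ⟨hσpsd, hσtr⟩ := hσ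
  have hρh : ρ.IsHermitian := hρpsd.isHermitian
  have hσh : σ.IsHermitian := hσpsd.isHermitian
  have hCh : (ρ - σ).IsHermitian := hρh.sub hσh
  set γ := hCh.eigenvalues with hγdef
  have hTdef : traceNorm (ρ - σ) = ∑ i, |γ i| := by rw [traceNorm, dif_pos hCh]
  rw [hTdef] at hT ⊢
  set T := ∑ i, |γ i| with hTs
  have hT0 : 0 ≤ T := Finset.sum_nonneg fun i _ => abs_nonneg _
  -- entropies via sorted eigenvalues
  have hSρ : renyiEntropy 1 ρ = ∑ i, eta (sortedEig hρh i) := by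
    rw [renyiEntropy, dif_pos hρh, if_pos rfl]
    exact (Equiv.sum_comp (Tuple.sort hρh.eigenvalues)
      (fun i => eta (hρh.eigenvalues i))).symm
  have hSσ : renyiEntropy 1 σ = ∑ i, eta (sortedEig hσh i) := by
    rw [renyiEntropy, dif_pos hσh, if_pos rfl]
    exact (Equiv.sum_comp (Tuple.sort hσh.eigenvalues)
      (fun i => eta (hσh.eigenvalues i))).symm
  -- eigenvalue facts for ρ
  have hsa : ∑ i, hρh.eigenvalues i = 1 := by
    have h1 := trace_eq_sum_eigenvalues hρh
    rw [hρtr] at h1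
    exact_mod_cast h1.symm
  have hsb : ∑ i, hσh.eigenvalues i = 1 := by
    have h1 := trace_eq_sum_eigenvalues hσh
    rw [hσtr] at h1
    exact_mod_cast h1.symm
  have ha0 : ∀ i, 0 ≤ sortedEig hρh i := fun i => hρpsd.eigenvalues_nonneg _
  have hb0 : ∀ i, 0 ≤ sortedEig hσh i := fun i => hσpsd.eigenvalues_nonneg _
  have ha1 : ∀ i, sortedEig hρh i ≤ 1 := by
    intro i
    rw [← hsa]
    exact Finset.single_le_sum (fun j _ => hρpsd.eigenvalues_nonneg j) (Finset.mem_univ _)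
  have hb1 : ∀ i, sortedEig hσh i ≤ 1 := by
    intro i
    rw [← hsb]
    exact Finset.single_le_sum (fun j _ => hσpsd.eigenvalues_nonneg j) (Finset.mem_univ _)
  have hsa' : ∑ i, sortedEig hρh i = 1 := (sum_sortedEig hρh).trans hsa
  have hsb' : ∑ i, sortedEig hσh i = 1 := (sum_sortedEig hσh).trans hsb
  -- the auxiliary matrix B = σ + (ρ - σ)₊
  set P := posPart hCh with hPdef
  have hPps : P.PosSemidef := posPart_posSemidef hCh
  set B := σ + P with hB
  have hBh : B.IsHermitian := hσh.add hPps.isHermitian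
  have m1 : ∀ k, sortedEig hρh k ≤ sortedEig hBh k := by
    intro k
    apply sortedEig_mono hρh hBh _ k
    have h1 := posPart_sub_posSemidef hCh
    have : B - ρ = posPart hCh - (ρ - σ) := by rw [hB]; abel
    rwa [← this] at h1
  have m2 : ∀ k, sortedEig hσh k ≤ sortedEig hBh k := by
    intro k
    apply sortedEig_mono hσh hBh _ k
    have : B - σ = P := by rw [hB]; abel
    rw [this]
    exact hPps
  have htrB : ∑ i, sortedEig hBh i = 1 + ∑ i, max (γ i) 0 := by
    have h1 := trace_eq_sum_eigenvalues hBh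
    have h2 : B.trace = 1 + ∑ i, ((max (γ i) 0 : ℝ) : ℂ) := by
      rw [hB, Matrix.trace_add, hσtr, hPdef, posPart_trace]
    rw [sum_sortedEig hBh]
    have h3 := h1.symm.trans h2
    exact_mod_cast h3
  have hγ0 : ∑ i, γ i = 0 := by
    have h1 := trace_eq_sum_eigenvalues hCh
    rw [Matrix.trace_sub, hρtr, hσtr, sub_self] at h1
    exact_mod_cast h1.symm
  have hTmax : T = 2 * ∑ i, max (γ i) 0 := by
    have habs : ∀ i, |γ i| = 2 * max (γ i) 0 - γ i := by
      intro i
      rcases le_total (γ i) 0 with h | h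
      · rw [abs_of_nonpos h, max_eq_right h]; ring
      · rw [abs_of_nonneg h, max_eq_left h]; ring
    rw [hTs]
    simp_rw [habs]
    rw [Finset.sum_sub_distrib, hγ0, Finset.mul_sum]
    simp [Finset.mul_sum]
  -- Mirsky-type bound
  have key : ∑ i, |sortedEig hρh i - sortedEig hσh i| ≤ T := by
    calc ∑ i, |sortedEig hρh i - sortedEig hσh i|
        ≤ ∑ i, ((sortedEig hBh i - sortedEig hρh i)
            + (sortedEig hBh i - sortedEig hσh i)) := by
          apply Finset.sum_le_sum
          intro i _
          rw [abs_le]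
          constructor
          · linarith [m1 i, m2 i]
          · linarith [m1 i, m2 i]
      _ = T := by
          rw [Finset.sum_add_distrib, Finset.sum_sub_distrib, Finset.sum_sub_distrib,
            htrB, hsa', hsb', hTmax]
          ring
  -- per-index absolute differences
  set ε := fun i => |sortedEig hρh i - sortedEig hσh i| with hε
  have hε0 : ∀ i, 0 ≤ ε i := fun i => abs_nonneg _
  have hεsum : ∀ i, ε i ≤ T :=
    fun i => le_trans (Finset.single_le_sum (fun j _ => abs_nonneg _)
      (Finset.mem_univ i)) key
  have hεe : ∀ i, ε i ≤ (Real.exp 1)⁻¹ := fun i => le_trans (hεsum i) hT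
  have hdiff : |renyiEntropy 1 ρ - renyiEntropy 1 σ| ≤ ∑ i, eta (ε i) := by
    rw [hSρ, hSσ, ← Finset.sum_sub_distrib]
    refine (Finset.abs_sum_le_sum_abs _ _).trans (Finset.sum_le_sum fun i _ => ?_)
    simp only [hε]
    rcases le_total (sortedEig hρh i) (sortedEig hσh i) with h | h
    · rw [show |sortedEig hρh i - sortedEig hσh i| = sortedEig hσh i - sortedEig hρh i by
        rw [abs_sub_comm, abs_of_nonneg (sub_nonneg.mpr h)]]
      apply abs_eta_sub_eta_le (ha0 i) h (hb1 i)
      have h2 := hεe i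
      simp only [hε] at h2
      rwa [abs_sub_comm, abs_of_nonneg (sub_nonneg.mpr h)] at h2
    · rw [show |sortedEig hρh i - sortedEig hσh i| = sortedEig hρh i - sortedEig hσh i by
        rw [abs_of_nonneg (sub_nonneg.mpr h)]]
      have h1 := abs_eta_sub_eta_le (hb0 i) h (ha1 i) ?_
      · rwa [abs_sub_comm] at h1
      · have h2 := hεe i
        simp only [hε] at h2
        rwa [abs_of_nonneg (sub_nonneg.mpr h)] at h2
  -- conclude
  have hlogD : 0 ≤ Real.log D := Real.log_nonneg (by exact_mod_cast hD.trans' (by norm_num))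
  rcases eq_or_lt_of_le (Finset.sum_nonneg fun i _ => hε0 i) with hE0 | hE0
  · -- all ε i = 0
    have hz : ∀ i ∈ Finset.univ, ε i = 0 := by
      intro i _
      have := (Finset.sum_eq_zero_iff_of_nonneg (fun j _ => hε0 j)).mp hE0.symm
      exact this i (Finset.mem_univ i)
    have : ∑ i, eta (ε i) = 0 := Finset.sum_eq_zero fun i hi => by rw [hz i hi, eta_zero]
    rw [this] at hdiff
    have hTlog : T * Real.log T ≤ 0 :=
      mul_nonpos_of_nonneg_of_nonpos hT0
        (Real.log_nonpos hT0 (hT.trans exp_inv_lt_one.le))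
    have : 0 ≤ T * Real.log D := mul_nonneg hT0 hlogD
    linarith
  · have hsum1 : ∑ i, eta (ε i)
        ≤ (∑ i, ε i) * Real.log D - (∑ i, ε i) * Real.log (∑ i, ε i) :=
      sum_eta_le (by omega) hε0 hE0
    have hsum2 : (∑ i, ε i) * Real.log D ≤ T * Real.log D :=
      mul_le_mul_of_nonneg_right key hlogD
    have hsum3 : -((∑ i, ε i) * Real.log (∑ i, ε i)) ≤ -(T * Real.log T) := by
      have := eta_mono (le_of_lt hE0) key hT
      simpa [eta] using this
    linarith
end
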